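/- Let A be a quiver algebra as above, v a class with θ(v) = 0, λ with λ([S_i]) > 0 for all i, and ξ ∈ R. An object E ∈ D^b_fin(A) of class v is σ_{θ,λ,ξ}-semistable of phase in (0,1] if and only if E is an A-module (i.e., lies in the heart) and θ(F) ≥ 0 for every nonzero proper submodule F ⊆ E; likewise for stable with strict inequality. In other words, Bridgeland (semi)stability for σ_{θ,λ,ξ} of objects of class v coincides with King θ-(semi)stability of A-modules of dimension vector v. -/

import Mathlib

open Real in
lemma arg_mk_of_im_pos {x y : ℝ} (hy : 0 < y) :
    Complex.arg ⟨x, y⟩ = π / 2 - Real.arctan (x / y) := by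
  set z : ℂ := ⟨x, y⟩ with hzdef
  have hz : z ≠ 0 := by
    intro h
    have : z.im = 0 := by rw [h]; simp
    simp [hzdef] at this; linarith
  have habs : ‖z‖ = Real.sqrt (x ^ 2 + y ^ 2) := by
    rw [Complex.norm_def, Complex.normSq_mk]; congr 1; ring
  have hsq : Real.sqrt (1 + (x / y) ^ 2) * y = Real.sqrt (x ^ 2 + y ^ 2) := by
    rw [← Real.sqrt_sq hy.le, ← Real.sqrt_mul (by positivity)]
    rw [Real.sqrt_sq hy.le]
    congr 1
    field_simp
    ring
  have hcos1 : Real.cos (Complex.arg z) = x / Real.sqrt (x ^ 2 + y ^ 2) := by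
    rw [Complex.cos_arg hz, habs]
  have hcos2 : Real.cos (π / 2 - Real.arctan (x / y)) = x / Real.sqrt (x ^ 2 + y ^ 2) := by
    rw [Real.cos_pi_div_two_sub, Real.sin_arctan, ← hsq, div_div, mul_comm]
  have h1 : Complex.arg z ∈ Set.Icc 0 π :=
    ⟨Complex.arg_nonneg_iff.2 (by simpa [hzdef] using hy.le), Complex.arg_le_pi z⟩
  have h2 : π / 2 - Real.arctan (x / y) ∈ Set.Icc 0 π := by
    have := Real.arctan_lt_pi_div_two (x / y)
    have := Real.neg_pi_div_two_lt_arctan (x / y)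
    constructor <;> [linarith; linarith]
  exact Real.injOn_cos h1 h2 (by rw [hcos1, hcos2])

open Real in
lemma arg_le_arg_iff_mk {x y c d : ℝ} (hy : 0 < y) (hd : 0 < d) :
    Complex.arg ⟨x, y⟩ ≤ Complex.arg ⟨c, d⟩ ↔ c * y ≤ x * d := by
  rw [arg_mk_of_im_pos hy, arg_mk_of_im_pos hd, sub_le_sub_iff_left,
    Real.arctan_strictMono.le_iff_le, div_le_div_iff₀ hd hy]

open Real in
lemma arg_lt_arg_iff_mk {x y c d : ℝ} (hy : 0 < y) (hd : 0 < d) :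
    Complex.arg ⟨x, y⟩ < Complex.arg ⟨c, d⟩ ↔ c * y < x * d := by
  rw [arg_mk_of_im_pos hy, arg_mk_of_im_pos hd, sub_lt_sub_iff_left,
    Real.arctan_strictMono.lt_iff_lt, div_lt_div_iff₀ hd hy]



/-- Lemma `lem:thetavsbridgeland`.  Let `A` be a quiver algebra, `v` a
class with `θ(v) = 0`, `λ` positive on classes of nonzero modules, and `ξ ∈ ℝ`.  An
object `E` of `D^b_fin(A)` of class `v` is `σ_{θ,λ,ξ}`-(semi)stable of phase in `(0,1]`
iff `E` lies in the heart (i.e. is an `A`-module) and `θ(F) ≥ 0` (resp. `> 0`) for every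
nonzero proper submodule `F ⊆ E`.

We model `E` by an actual module `M` over the algebra `A` (so that membership in the
heart is built in), with a dimension-vector function `cls` on its submodules; Bridgeland
(semi)stability of `E` of phase in `(0,1]` means that the phase of `Z(cls N)` — measured
by `Complex.arg`, which is an increasing reparametrisation of the phase on the
semi-closed upper half-plane — is at most (resp. strictly less than) the phase of
`Z(cls ⊤)` for every nonzero proper submodule `N`. -/
theorem bridgeland_semistable_iff_king_semistable
    (Q0 : Type*) [Fintype Q0]
    (A : Type*) [Ring A]
    (M : Type*) [AddCommGroup M] [Module A M]        -- the object `E`, an `A`-module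
    (cls : Submodule A M → Q0 → ℕ)                   -- dimension vectors of submodules
    (θ lam : Q0 → ℝ) (ξ : ℝ)
    (v : Q0 → ℕ)
    (hv : cls ⊤ = v)                                 -- `E` has class `v`
    (hθv : ∑ i, (v i : ℝ) * θ i = 0)                 -- `θ(v) = 0`
    (hlam : ∀ N : Submodule A M, N ≠ ⊥ → 0 < ∑ i, (cls N i : ℝ) * lam i)
    (Z : (Q0 → ℕ) → ℂ)
    (hZ : ∀ w, Z w = ((∑ i, (w i : ℝ) * θ i : ℝ) : ℂ)
      + (Complex.I + (ξ : ℂ)) * ((∑ i, (w i : ℝ) * lam i : ℝ) : ℂ)) :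
    -- semistable ↔ θ-semistable
    ((∀ N : Submodule A M, N ≠ ⊥ → N ≠ ⊤ →
        Complex.arg (Z (cls N)) ≤ Complex.arg (Z (cls ⊤)))
      ↔ (∀ N : Submodule A M, N ≠ ⊥ → N ≠ ⊤ → 0 ≤ ∑ i, (cls N i : ℝ) * θ i)) ∧
    -- stable ↔ θ-stable
    ((∀ N : Submodule A M, N ≠ ⊥ → N ≠ ⊤ →
        Complex.arg (Z (cls N)) < Complex.arg (Z (cls ⊤)))
      ↔ (∀ N : Submodule A M, N ≠ ⊥ → N ≠ ⊤ → 0 < ∑ i, (cls N i : ℝ) * θ i)) := by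
  
  classical
  by_cases htop : (⊤ : Submodule A M) = ⊥
  · constructor <;> constructor <;> intro _ N hN hN' <;>
      exact absurd (le_bot_iff.mp (htop ▸ le_top)) hN
  · have hlv : 0 < ∑ i, (cls ⊤ i : ℝ) * lam i := hlam ⊤ htop
    have hθtop : ∑ i, (cls ⊤ i : ℝ) * θ i = 0 := by rw [hv]; exact hθv
    have hmk : ∀ w, Z w =
        ⟨(∑ i, (w i : ℝ) * θ i) + ξ * ∑ i, (w i : ℝ) * lam i, ∑ i, (w i : ℝ) * lam i⟩ := by
      intro w
      rw [hZ w]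
      apply Complex.ext <;> simp <;> ring
    have key : ∀ N : Submodule A M, N ≠ ⊥ →
        ((Complex.arg (Z (cls N)) ≤ Complex.arg (Z (cls ⊤)) ↔
            0 ≤ ∑ i, (cls N i : ℝ) * θ i) ∧
         (Complex.arg (Z (cls N)) < Complex.arg (Z (cls ⊤)) ↔
            0 < ∑ i, (cls N i : ℝ) * θ i)) := by
      intro N hN
      have hlN : 0 < ∑ i, (cls N i : ℝ) * lam i := hlam N hN
      rw [hmk (cls N), hmk (cls ⊤), arg_le_arg_iff_mk hlN hlv, arg_lt_arg_iff_mk hlN hlv]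
      constructor
      · constructor <;> intro h <;> nlinarith [hlv, hlN, hθtop]
      · constructor <;> intro h <;> nlinarith [hlv, hlN, hθtop]
    constructor
    · constructor <;> intro h N hN hN'
      · exact ((key N hN).1).mp (h N hN hN')
      · exact ((key N hN).1).mpr (h N hN hN')
    · constructor <;> intro h N hN hN'
      · exact ((key N hN).2).mp (h N hN hN')
      · exact ((key N hN).2).mpr (h N hN hN')
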